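/- Let d ≥ 1 be a natural number, K > 0 a real number, and S ∈ [0, K·d]. Then max(0, S − K) = ((d−1)/d)·S − Σ_{m=1}^{∞} (2·K·d)/(m²·π²) · sin(m·π/d) · sin(m·π·S/(K·d)); that is, the series Σ_{m≥1} (2Kd)/(m²π²) sin(mπ/d) sin(mπS/(Kd)) converges and its sum equals ((d−1)/d)·S − max(0, S − K). -/

import Mathlib

open Real

lemma cosSum {θ : ℝ} (h0 : 0 ≤ θ) (h2 : θ ≤ 2 * π) :
    HasSum (fun m : ℕ => Real.cos ((m + 1 : ℝ) * θ) / ((m + 1 : ℝ) ^ 2))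
      (θ ^ 2 / 4 - π * θ / 2 + π ^ 2 / 6) := by
  have hπ : (0:ℝ) < π := Real.pi_pos
  set x : ℝ := θ / (2 * π) with hx
  have hx0 : 0 ≤ x := by positivity
  have hx1 : x ≤ 1 := by
    rw [hx, div_le_one (by positivity)]; exact h2
  have h := hasSum_one_div_nat_pow_mul_cos (k := 1) one_ne_zero ⟨hx0, hx1⟩
  have hb2 : (bernoulli 2 : ℚ) = 1 / 6 := by
    rw [bernoulli, bernoulli'_two]; norm_num
  have hb : (Polynomial.map (algebraMap ℚ ℝ) (Polynomial.bernoulli 2)).eval x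
      = x ^ 2 - x + 1 / 6 := by
    simp [Polynomial.bernoulli, Finset.sum_range_succ, hb2]
    push_cast
    ring
  rw [hb] at h
  have hval : ((-1 : ℝ)) ^ (1 + 1) * (2 * π) ^ (2 * 1) / 2 / (Nat.factorial (2 * 1) : ℝ) *
      (x ^ 2 - x + 1 / 6) = θ ^ 2 / 4 - π * θ / 2 + π ^ 2 / 6 := by
    rw [hx]
    norm_num [Nat.factorial]
    field_simp
    ring
  rw [hval] at h
  have harg : ∀ n : ℕ, 1 / (n : ℝ) ^ (2 * 1) * Real.cos (2 * π * n * x)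
      = Real.cos ((n : ℝ) * θ) / (n : ℝ) ^ 2 := by
    intro n
    rw [hx]
    have : 2 * π * (n : ℝ) * (θ / (2 * π)) = (n : ℝ) * θ := by
      field_simp
    rw [this]; ring
  simp_rw [harg] at h
  have h1 := (hasSum_nat_add_iff' (f := fun n : ℕ => Real.cos ((n : ℝ) * θ) / (n : ℝ) ^ 2) 1).2 h
  rw [Finset.sum_range_one] at h1
  simp only [Nat.cast_zero, zero_mul, Real.cos_zero] at h1
  norm_num at h1
  convert h1 using 2 with m

/-- Fourier sine-series expansion of the call payoff `max 0 (S - K)` on the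
interval `[0, K*d]`: the series `Σ_{m ≥ 1} (2Kd)/(m²π²) sin(mπ/d) sin(mπS/(Kd))`
converges with sum `((d-1)/d)·S - max 0 (S - K)`.  (The series index `m ≥ 1`
is realised as `m + 1` with `m : ℕ`.) -/
theorem payoff_fourier_series
    (d : ℕ) (hd : 1 ≤ d) (K : ℝ) (hK : 0 < K) (S : ℝ)
    (hS : S ∈ Set.Icc (0 : ℝ) (K * d)) :
    HasSum
      (fun m : ℕ =>
        (2 * K * d) / ((m + 1 : ℝ) ^ 2 * π ^ 2) *
          Real.sin ((m + 1 : ℝ) * π / d) *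
          Real.sin ((m + 1 : ℝ) * π * S / (K * d)))
      (((d : ℝ) - 1) / d * S - max 0 (S - K)) := by
  obtain ⟨hS0, hS1⟩ := hS
  have hπ : (0:ℝ) < π := Real.pi_pos
  have hd0 : (0:ℝ) < d := by exact_mod_cast Nat.lt_of_lt_of_le Nat.zero_lt_one hd
  have hd1 : (1:ℝ) ≤ d := by exact_mod_cast hd
  set a : ℝ := π / d with ha
  set b : ℝ := π * S / (K * d) with hb
  have ha0 : 0 ≤ a := by positivity
  have ha1 : a ≤ π := by
    rw [ha, div_le_iff₀ hd0]; nlinarith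
  have hb0 : 0 ≤ b := by
    rw [hb]; positivity
  have hb1 : b ≤ π := by
    rw [hb, div_le_iff₀ (by positivity)]; nlinarith
  have hsin : ∀ m : ℕ,
      (2 * K * d) / ((m + 1 : ℝ) ^ 2 * π ^ 2) *
        Real.sin ((m + 1 : ℝ) * π / d) * Real.sin ((m + 1 : ℝ) * π * S / (K * d))
      = (K * d / π ^ 2) *
        ((Real.cos ((m + 1 : ℝ) * a - (m + 1 : ℝ) * b)
          - Real.cos ((m + 1 : ℝ) * (a + b))) / ((m + 1 : ℝ) ^ 2)) := by
    intro m
    have e1 : (m + 1 : ℝ) * π / d = (m + 1 : ℝ) * a := by rw [ha]; ring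
    have e2 : (m + 1 : ℝ) * π * S / (K * d) = (m + 1 : ℝ) * b := by rw [hb]; ring
    rw [e1, e2, Real.cos_sub, mul_add, Real.cos_add]
    have hm : ((m : ℝ) + 1) ^ 2 ≠ 0 := by positivity
    field_simp
    ring
  rcases le_total S K with hc | hc
  -- case S ≤ K
  · have hab : b ≤ a := by
      rw [ha, hb, div_le_div_iff₀ (by positivity) hd0]
      nlinarith [mul_le_mul_of_nonneg_left hc (mul_pos hπ hd0).le]
    have h1 := cosSum (θ := a - b) (by linarith) (by linarith)
    have h2 := cosSum (θ := a + b) (by linarith) (by linarith)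
    have h3 := (h1.sub h2).mul_left (K * d / π ^ 2)
    have : max 0 (S - K) = 0 := by
      rw [max_eq_left]; linarith
    rw [this]
    convert h3 using 1
    · rfl
    · funext m
      rw [hsin m, mul_sub ((m:ℝ)+1) a b]
      ring
    · rw [ha, hb]
      have hK' : K ≠ 0 := ne_of_gt hK
      have hd' : (d:ℝ) ≠ 0 := ne_of_gt hd0
      have hπ' : π ≠ 0 := ne_of_gt hπ
      field_simp
      ring
  -- case K ≤ S
  · have hab : a ≤ b := by
      rw [ha, hb, div_le_div_iff₀ hd0 (by positivity)]
      nlinarith [mul_le_mul_of_nonneg_left hc (mul_pos hπ hd0).le]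
    have h1 := cosSum (θ := b - a) (by linarith) (by linarith)
    have h2 := cosSum (θ := a + b) (by linarith) (by linarith)
    have h3 := (h1.sub h2).mul_left (K * d / π ^ 2)
    have : max 0 (S - K) = S - K := by
      rw [max_eq_right]; linarith
    rw [this]
    convert h3 using 1
    · rfl
    · funext m
      rw [hsin m, show ((m:ℝ)+1)*(b-a) = -(((m:ℝ)+1)*a - ((m:ℝ)+1)*b) by ring, Real.cos_neg]
      ring
    · rw [ha, hb]
      have hK' : K ≠ 0 := ne_of_gt hK
      have hd' : (d:ℝ) ≠ 0 := ne_of_gt hd0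
      have hπ' : π ≠ 0 := ne_of_gt hπ
      field_simp
      ring
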